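/- arXiv:1802.08686 — 5 statements merged into one kernel-verified Lean document; each statement's English description precedes it below -/
import Mathlib

section
/- For all x ≥ 0, the standard Gaussian CDF satisfies 1 - (e^{-x²/2}/√(2π)) · 2/(x + √(x²+8/π)) ≤ Φ(x) ≤ 1 - (e^{-x²/2}/√(2π)) · 2/(x + √(x²+4)). -/
open Real Set
open MeasureTheory Filter

lemma int_gauss : Integrable (fun u : ℝ => Real.exp (-u ^ 2 / 2)) := by
  have h := integrable_exp_neg_mul_sq (by norm_num : (0:ℝ) < 1/2)
  convert h using 2 with u; ring_nf

lemma int_mul_gauss : Integrable (fun u : ℝ => u * Real.exp (-u ^ 2 / 2)) := by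
  have h := integrable_mul_exp_neg_mul_sq (by norm_num : (0:ℝ) < 1/2)
  convert h using 2 with u; ring_nf

lemma int_sq_gauss : Integrable (fun u : ℝ => u ^ 2 * Real.exp (-u ^ 2 / 2)) := by
  have h := (integrable_exp_neg_mul_sq (by norm_num : (0:ℝ) < 1/4)).const_mul 4
  refine h.mono' (by continuity : Continuous fun u : ℝ => u ^ 2 * Real.exp (-u ^ 2 / 2)).aestronglyMeasurable
    (ae_of_all _ fun u => ?_)
  have h1 : u ^ 2 ≤ 4 * Real.exp (u ^ 2 / 4) := by
    nlinarith [Real.add_one_le_exp (u ^ 2 / 4)]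
  have h2 : (0:ℝ) < Real.exp (-u^2/2) := Real.exp_pos _
  rw [Real.norm_of_nonneg (by positivity)]
  calc u ^ 2 * Real.exp (-u ^ 2 / 2) ≤ (4 * Real.exp (u ^ 2 / 4)) * Real.exp (-u ^ 2 / 2) := by
        nlinarith
    _ = 4 * Real.exp (-(1/4) * u ^ 2) := by
        rw [mul_assoc, ← Real.exp_add]; congr 2; ring

lemma tendsto_gauss : Tendsto (fun u : ℝ => Real.exp (-u ^ 2 / 2)) atTop (nhds 0) := by
  apply Real.tendsto_exp_atBot.comp
  refine tendsto_atBot_mono' atTop (f₁ := fun u : ℝ => -u) ?_ ?_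
  · filter_upwards [eventually_ge_atTop (2:ℝ)] with u hu
    show -u ^ 2 / 2 ≤ -u
    nlinarith
  · exact tendsto_neg_atBot_iff.mpr tendsto_id

lemma tendsto_mul_gauss : Tendsto (fun u : ℝ => u * Real.exp (-u ^ 2 / 2)) atTop (nhds 0) := by
  have h := rpow_mul_exp_neg_mul_sq_isLittleO_exp_neg (by norm_num : (0:ℝ) < 1/2) 1
  have h2 : Tendsto (fun u : ℝ => Real.exp (-(1/2) * u)) atTop (nhds 0) := by
    apply Real.tendsto_exp_atBot.comp
    refine tendsto_atBot_mono' atTop (f₁ := fun u : ℝ => -u/2) ?_ ?_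
    · filter_upwards with u
      show -(1/2) * u ≤ -u/2
      linarith
    · exact Tendsto.atBot_div_const (by norm_num) (tendsto_neg_atBot_iff.mpr tendsto_id)
  have h3 := h.isBigO.trans_tendsto h2
  apply h3.congr'
  filter_upwards with u
  rw [Real.rpow_one]
  congr 1
  ring

lemma hasDeriv_neg_gauss (u : ℝ) :
    HasDerivAt (fun v : ℝ => -Real.exp (-v ^ 2 / 2)) (u * Real.exp (-u ^ 2 / 2)) u := by
  have h1 : HasDerivAt (fun v : ℝ => -v ^ 2 / 2) (-u) u := by
    have := ((hasDerivAt_pow 2 u).neg).div_const 2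
    refine this.congr_deriv ?_
    push_cast; ring
  have := (h1.exp).neg
  refine this.congr_deriv ?_
  ring

lemma hasDeriv_neg_mul_gauss (u : ℝ) :
    HasDerivAt (fun v : ℝ => -(v * Real.exp (-v ^ 2 / 2)))
      (u ^ 2 * Real.exp (-u ^ 2 / 2) - Real.exp (-u ^ 2 / 2)) u := by
  have h1 : HasDerivAt (fun v : ℝ => -v ^ 2 / 2) (-u) u := by
    have := ((hasDerivAt_pow 2 u).neg).div_const 2
    refine this.congr_deriv ?_
    push_cast; ring
  have := ((hasDerivAt_id u).mul h1.exp).neg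
  refine this.congr_deriv ?_
  simp only [id_eq]
  ring

lemma integral_Ioi_mul_gauss (x : ℝ) :
    ∫ u in Ioi x, u * Real.exp (-u ^ 2 / 2) = Real.exp (-x ^ 2 / 2) := by
  have ht : Tendsto (fun v : ℝ => -Real.exp (-v ^ 2 / 2)) atTop (nhds 0) := by
    simpa using tendsto_gauss.neg
  have h := integral_Ioi_of_hasDerivAt_of_tendsto' (a := x)
    (fun u _ => hasDeriv_neg_gauss u) int_mul_gauss.integrableOn ht
  rw [h]
  simp

lemma integral_Ioi_sq_gauss (x : ℝ) :
    ∫ u in Ioi x, u ^ 2 * Real.exp (-u ^ 2 / 2)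
      = x * Real.exp (-x ^ 2 / 2) + ∫ u in Ioi x, Real.exp (-u ^ 2 / 2) := by
  have ht : Tendsto (fun v : ℝ => -(v * Real.exp (-v ^ 2 / 2))) atTop (nhds 0) := by
    simpa using tendsto_mul_gauss.neg
  have h := integral_Ioi_of_hasDerivAt_of_tendsto' (a := x)
    (fun u _ => hasDeriv_neg_mul_gauss u) (int_sq_gauss.sub int_gauss).integrableOn ht
  rw [integral_sub int_sq_gauss.integrableOn int_gauss.integrableOn] at h
  simp only [zero_sub, neg_neg] at h
  linarith [h]

-- shift lemma
lemma shift_Ioi (x : ℝ) (f : ℝ → ℝ) :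
    ∫ u in Ioi x, f u = ∫ u in Ioi 0, f (u + x) := by
  rw [← integral_indicator measurableSet_Ioi, ← integral_indicator measurableSet_Ioi,
    ← integral_add_right_eq_self (fun u => (Ioi x).indicator f u) x]
  congr 1
  funext u
  by_cases h : 0 < u
  · rw [indicator_of_mem (by simpa using h), indicator_of_mem (by simpa using h)]
  · rw [indicator_of_notMem (by simpa using h), indicator_of_notMem (by simpa using h)]

-- psi integrability
lemma int_psi {x : ℝ} (hx : 0 ≤ x) :
    IntegrableOn (fun r : ℝ => Real.exp (-x * r - r ^ 2 / 2)) (Ioi 0) := by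
  refine (int_gauss.integrableOn (s := Ioi 0)).mono'
    (by continuity : Continuous fun r : ℝ => Real.exp (-x * r - r ^ 2 / 2)).aestronglyMeasurable
    ?_
  rw [ae_restrict_iff' measurableSet_Ioi]
  filter_upwards with r hr
  rw [Real.norm_of_nonneg (Real.exp_pos _).le, Real.exp_le_exp]
  nlinarith [mem_Ioi.mp hr]

lemma int_mul_psi {x : ℝ} (hx : 0 ≤ x) :
    IntegrableOn (fun r : ℝ => r * Real.exp (-x * r - r ^ 2 / 2)) (Ioi 0) := by
  refine (int_mul_gauss.integrableOn (s := Ioi 0)).mono'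
    (by continuity : Continuous fun r : ℝ => r * Real.exp (-x * r - r ^ 2 / 2)).aestronglyMeasurable
    ?_
  rw [ae_restrict_iff' measurableSet_Ioi]
  filter_upwards with r hr
  have hr' := mem_Ioi.mp hr
  rw [Real.norm_of_nonneg (by positivity)]
  have : Real.exp (-x * r - r ^ 2 / 2) ≤ Real.exp (-r ^ 2 / 2) := by
    rw [Real.exp_le_exp]; nlinarith
  nlinarith [Real.exp_pos (-r ^ 2 / 2)]

lemma sum_J {x : ℝ} (hx : 0 ≤ x) :
    x * (∫ r in Ioi 0, Real.exp (-x * r - r ^ 2 / 2))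
      + (∫ r in Ioi 0, r * Real.exp (-x * r - r ^ 2 / 2)) = 1 := by
  have hd : ∀ r : ℝ, HasDerivAt (fun v : ℝ => -Real.exp (-x * v - v ^ 2 / 2))
      (x * Real.exp (-x * r - r ^ 2 / 2) + r * Real.exp (-x * r - r ^ 2 / 2)) r := by
    intro r
    have h1 : HasDerivAt (fun v : ℝ => -x * v - v ^ 2 / 2) (-x - r) r := by
      have := ((hasDerivAt_id r).const_mul (-x)).sub ((hasDerivAt_pow 2 r).div_const 2)
      refine this.congr_deriv ?_
      push_cast; ring
    have := (h1.exp).neg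
    refine this.congr_deriv ?_
    ring
  have ht : Tendsto (fun v : ℝ => -Real.exp (-x * v - v ^ 2 / 2)) atTop (nhds 0) := by
    rw [show (0:ℝ) = -0 by norm_num]
    apply Tendsto.neg
    apply Real.tendsto_exp_atBot.comp
    refine tendsto_atBot_mono' atTop (f₁ := fun v : ℝ => -v) ?_ ?_
    · filter_upwards [eventually_ge_atTop (2:ℝ)] with v hv
      show -x * v - v ^ 2 / 2 ≤ -v
      nlinarith
    · exact tendsto_neg_atBot_iff.mpr tendsto_id
  have h := integral_Ioi_of_hasDerivAt_of_tendsto' (a := 0)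
    (fun r _ => hd r) ?_ ht
  · rw [integral_add ((int_psi hx).const_mul x) (int_mul_psi hx),
      MeasureTheory.integral_const_mul] at h
    simpa using h
  · exact ((int_psi hx).const_mul x).add (int_mul_psi hx)

lemma polar_bound {x : ℝ} (hx : 0 ≤ x) :
    (∫ r in Ioi 0, Real.exp (-x * r - r ^ 2 / 2)) ^ 2
      ≤ (π / 2) * ∫ r in Ioi 0, r * Real.exp (-x * r - r ^ 2 / 2) := by
  set ψ : ℝ → ℝ := fun r => Real.exp (-x * r - r ^ 2 / 2) with hψ
  set G : ℝ × ℝ → ℝ := fun p =>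
    Real.exp (-x * Real.sqrt (p.1 ^ 2 + p.2 ^ 2) - (p.1 ^ 2 + p.2 ^ 2) / 2) with hG
  set Q : Set (ℝ × ℝ) := Ioi 0 ×ˢ Ioi 0 with hQ
  have hQm : MeasurableSet Q := measurableSet_Ioi.prod measurableSet_Ioi
  have hGcont : Continuous G := by
    apply Real.continuous_exp.comp
    fun_prop
  -- step 1 : square as product integral
  have h1 : (∫ r in Ioi 0, ψ r) ^ 2 = ∫ p in Q, ψ p.1 * ψ p.2 := by
    rw [hQ, MeasureTheory.Measure.volume_eq_prod, setIntegral_prod_mul, sq]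
  -- integrability of both 2d functions on Q
  have hFint : IntegrableOn (fun p : ℝ × ℝ => ψ p.1 * ψ p.2) Q := by
    have := (int_psi hx).mul_prod (int_psi hx)
    rwa [Measure.prod_restrict, ← MeasureTheory.Measure.volume_eq_prod] at this
  have hGint : IntegrableOn G Q := by
    have hmaj : Integrable (fun p : ℝ × ℝ =>
        Real.exp (-p.1 ^ 2 / 2) * Real.exp (-p.2 ^ 2 / 2)) := by
      have := int_gauss.mul_prod int_gauss
      rwa [← MeasureTheory.Measure.volume_eq_prod] at this
    refine (hmaj.integrableOn (s := Q)).mono' (hGcont.aestronglyMeasurable.restrict) ?_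
    filter_upwards with p
    rw [Real.norm_of_nonneg (Real.exp_pos _).le, ← Real.exp_add, Real.exp_le_exp]
    have h0 : 0 ≤ Real.sqrt (p.1 ^ 2 + p.2 ^ 2) := Real.sqrt_nonneg _
    nlinarith [mul_nonneg hx h0]
  -- step 2 : pointwise comparison on Q
  have h2 : ∫ p in Q, ψ p.1 * ψ p.2 ≤ ∫ p in Q, G p := by
    refine setIntegral_mono_on hFint hGint hQm ?_
    rintro ⟨s, t⟩ ⟨hs, ht⟩
    have hs' := mem_Ioi.mp hs
    have ht' := mem_Ioi.mp ht
    simp only [hψ, hG]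
    rw [← Real.exp_add, Real.exp_le_exp]
    have hsqrt : Real.sqrt (s ^ 2 + t ^ 2) ≤ s + t := by
      rw [show s + t = Real.sqrt ((s + t) ^ 2) from (Real.sqrt_sq (by positivity)).symm]
      exact Real.sqrt_le_sqrt (by nlinarith)
    nlinarith [mul_le_mul_of_nonneg_left hsqrt hx]
  -- step 3 : polar coordinates
  have h3 : ∫ p in Q, G p = (∫ r in Ioi 0, r * ψ r) * (π / 2) := by
    rw [← integral_indicator hQm, ← integral_comp_polarCoord_symm (Q.indicator G)]
    have hEq : EqOn (fun p : ℝ × ℝ => p.1 • Q.indicator G (polarCoord.symm p))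
        ((Ioi (0:ℝ) ×ˢ Ioo 0 (π/2)).indicator (fun p => p.1 * ψ p.1)) polarCoord.target := by
      rintro ⟨r, θ⟩ ⟨hr, hθ⟩
      have hr' := mem_Ioi.mp hr
      obtain ⟨hθ1, hθ2⟩ := hθ
      have hmem : polarCoord.symm (r, θ) ∈ Q ↔ θ ∈ Ioo 0 (π/2) := by
        rw [polarCoord_symm_apply]
        simp only [hQ, mem_prod, mem_Ioi, mem_Ioo]
        constructor
        · rintro ⟨hc, hs⟩
          have hcos : 0 < Real.cos θ := by nlinarith [Real.neg_one_le_cos θ]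
          have hsin : 0 < Real.sin θ := by nlinarith [Real.neg_one_le_sin θ]
          have hθpos : 0 < θ := by
            by_contra hle
            push_neg at hle
            have : 0 ≤ Real.sin (-θ) :=
              Real.sin_nonneg_of_nonneg_of_le_pi (by linarith) (by linarith)
            rw [Real.sin_neg] at this
            linarith
          refine ⟨hθpos, ?_⟩
          by_contra hge
          push_neg at hge
          have : Real.cos θ ≤ 0 :=
            Real.cos_nonpos_of_pi_div_two_le_of_le hge (by linarith [pi_pos])
          linarith
        · rintro ⟨h1, h2⟩
          have hcos : 0 < Real.cos θ :=
            Real.cos_pos_of_mem_Ioo ⟨by linarith [pi_pos], by linarith⟩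
          have hsin : 0 < Real.sin θ :=
            Real.sin_pos_of_pos_of_lt_pi h1 (by linarith [pi_pos])
          exact ⟨by positivity, by positivity⟩
      show r • Q.indicator G (polarCoord.symm (r, θ))
        = (Ioi (0:ℝ) ×ˢ Ioo 0 (π/2)).indicator (fun p => p.1 * ψ p.1) (r, θ)
      by_cases hin : θ ∈ Ioo 0 (π/2)
      · rw [indicator_of_mem (hmem.mpr hin), indicator_of_mem (by exact ⟨hr, hin⟩)]
        rw [polarCoord_symm_apply]
        simp only [hG, hψ, smul_eq_mul]
        congr 2
        have hsq : (r * Real.cos θ) ^ 2 + (r * Real.sin θ) ^ 2 = r ^ 2 := by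
          have := Real.sin_sq_add_cos_sq θ
          nlinarith
        rw [hsq, Real.sqrt_sq hr'.le]
      · rw [indicator_of_notMem (fun h => hin (hmem.mp h)),
          indicator_of_notMem (fun h => hin h.2)]
        simp
    rw [setIntegral_congr_fun (polarCoord.open_target.measurableSet) hEq,
      setIntegral_indicator (measurableSet_Ioi.prod measurableSet_Ioo)]
    have hinter : polarCoord.target ∩ (Ioi (0:ℝ) ×ˢ Ioo 0 (π/2))
        = Ioi (0:ℝ) ×ˢ Ioo 0 (π/2) := by
      apply inter_eq_self_of_subset_right
      rintro ⟨r, θ⟩ ⟨hr, hθ⟩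
      exact ⟨hr, ⟨by linarith [hθ.1, pi_pos], by linarith [hθ.2, pi_pos]⟩⟩
    rw [hinter]
    have : ∀ p : ℝ × ℝ, p.1 * ψ p.1 = (fun r => r * ψ r) p.1 * (fun _ : ℝ => (1:ℝ)) p.2 := by
      intro p; simp
    rw [MeasureTheory.Measure.volume_eq_prod]
    calc ∫ p in Ioi (0:ℝ) ×ˢ Ioo 0 (π/2), p.1 * ψ p.1 ∂(volume.prod volume)
        = ∫ p in Ioi (0:ℝ) ×ˢ Ioo 0 (π/2),
            (fun r => r * ψ r) p.1 * (fun _ : ℝ => (1:ℝ)) p.2 ∂(volume.prod volume) := by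
          simp
      _ = (∫ r in Ioi (0:ℝ), r * ψ r) * ∫ θ in Ioo (0:ℝ) (π/2), (1:ℝ) :=
          setIntegral_prod_mul (fun r => r * ψ r) (fun _ => (1:ℝ)) _ _
      _ = (∫ r in Ioi (0:ℝ), r * ψ r) * (π / 2) := by
          rw [setIntegral_const]
          simp [Real.volume_Ioo, ENNReal.toReal_ofReal (by positivity : (0:ℝ) ≤ π/2)]
          exact Or.inl (by positivity)
  calc (∫ r in Ioi 0, ψ r) ^ 2 = ∫ p in Q, ψ p.1 * ψ p.2 := h1
    _ ≤ ∫ p in Q, G p := h2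
    _ = (∫ r in Ioi 0, r * ψ r) * (π / 2) := h3
    _ = (π / 2) * ∫ r in Ioi 0, r * ψ r := by ring

lemma gauss_total : ∫ u : ℝ, Real.exp (-u ^ 2 / 2) = Real.sqrt (2 * π) := by
  have h : ∀ u : ℝ, -u ^ 2 / 2 = -(1/2) * u ^ 2 := fun u => by ring
  simp_rw [h, integral_gaussian]
  rw [show π / (1/2) = 2 * π by ring]

lemma Q_pos (x : ℝ) : 0 < ∫ u in Ioi x, Real.exp (-u ^ 2 / 2) := by
  rw [setIntegral_pos_iff_support_of_nonneg_ae
    (ae_of_all _ fun u => (Real.exp_pos _).le) int_gauss.integrableOn]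
  have : Function.support (fun u : ℝ => Real.exp (-u ^ 2 / 2)) = univ := by
    ext u; simp [Function.mem_support, (Real.exp_pos _).ne']
  rw [this, univ_inter, Real.volume_Ioi]
  simp

lemma Q_shift (x : ℝ) : ∫ u in Ioi x, Real.exp (-u ^ 2 / 2)
    = Real.exp (-x ^ 2 / 2) * ∫ r in Ioi 0, Real.exp (-x * r - r ^ 2 / 2) := by
  rw [shift_Ioi x, ← MeasureTheory.integral_const_mul]
  congr 1; funext u
  rw [← Real.exp_add]; congr 1; ring

lemma cs_bound (x : ℝ) (hx : 0 ≤ x) :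
    Real.exp (-x ^ 2 / 2) ^ 2
      ≤ (∫ u in Ioi x, Real.exp (-u ^ 2 / 2)) ^ 2
        + x * Real.exp (-x ^ 2 / 2) * ∫ u in Ioi x, Real.exp (-u ^ 2 / 2) := by
  set Q : ℝ := ∫ u in Ioi x, Real.exp (-u ^ 2 / 2) with hQdef
  set E : ℝ := Real.exp (-x ^ 2 / 2) with hE
  have hQ : 0 < Q := Q_pos x
  set l : ℝ := E / Q with hl
  have hlQ : l * Q = E := div_mul_cancel₀ E hQ.ne'
  have h0 : 0 ≤ ∫ u in Ioi x, (u - l) ^ 2 * Real.exp (-u ^ 2 / 2) :=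
    setIntegral_nonneg measurableSet_Ioi fun u _ => by positivity
  have hexp : ∀ u : ℝ, (u - l) ^ 2 * Real.exp (-u ^ 2 / 2)
      = u ^ 2 * Real.exp (-u ^ 2 / 2) - (2 * l) * (u * Real.exp (-u ^ 2 / 2))
        + l ^ 2 * Real.exp (-u ^ 2 / 2) := fun u => by ring
  simp_rw [hexp] at h0
  have hfint : Integrable (fun u : ℝ => u ^ 2 * Real.exp (-u ^ 2 / 2)
      - 2 * l * (u * Real.exp (-u ^ 2 / 2))) (volume.restrict (Ioi x)) :=
    int_sq_gauss.integrableOn.sub ((int_mul_gauss.integrableOn).const_mul (2 * l))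
  have hgint : Integrable (fun u : ℝ => l ^ 2 * Real.exp (-u ^ 2 / 2))
      (volume.restrict (Ioi x)) := (int_gauss.integrableOn).const_mul (l ^ 2)
  have hAint : Integrable (fun u : ℝ => u ^ 2 * Real.exp (-u ^ 2 / 2))
      (volume.restrict (Ioi x)) := int_sq_gauss.integrableOn
  have hBint : Integrable (fun u : ℝ => 2 * l * (u * Real.exp (-u ^ 2 / 2)))
      (volume.restrict (Ioi x)) := (int_mul_gauss.integrableOn).const_mul (2 * l)
  rw [integral_add hfint hgint, integral_sub hAint hBint,
    MeasureTheory.integral_const_mul, MeasureTheory.integral_const_mul,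
    integral_Ioi_mul_gauss, integral_Ioi_sq_gauss, ← hQdef, ← hE] at h0
  nlinarith [mul_nonneg h0 hQ.le, hlQ, sq_nonneg (l * Q - E)]

lemma polar_final (x : ℝ) (hx : 0 ≤ x) :
    (2 / π) * (∫ u in Ioi x, Real.exp (-u ^ 2 / 2)) ^ 2
      + x * Real.exp (-x ^ 2 / 2) * (∫ u in Ioi x, Real.exp (-u ^ 2 / 2))
      ≤ Real.exp (-x ^ 2 / 2) ^ 2 := by
  have hπ := pi_pos
  set J0 : ℝ := ∫ r in Ioi 0, Real.exp (-x * r - r ^ 2 / 2) with hJ0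
  set J1 : ℝ := ∫ r in Ioi 0, r * Real.exp (-x * r - r ^ 2 / 2) with hJ1
  have h1 : x * J0 + J1 = 1 := sum_J hx
  have h2 : J0 ^ 2 ≤ (π / 2) * J1 := polar_bound hx
  have h3 := Q_shift x
  rw [← hJ0] at h3
  rw [h3]
  have hE : (0:ℝ) < Real.exp (-x ^ 2 / 2) := Real.exp_pos _
  have key : (2 / π) * J0 ^ 2 + x * J0 ≤ 1 := by
    have : (2 / π) * J0 ^ 2 ≤ J1 := by
      rw [div_mul_eq_mul_div, div_le_iff₀ hπ] at *
      nlinarith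
    linarith
  nlinarith [sq_nonneg (Real.exp (-x ^ 2 / 2)), mul_le_mul_of_nonneg_left key (le_of_lt (mul_pos hE hE))]

/-- The standard normal cumulative distribution function. -/
noncomputable def Phi (x : ℝ) : ℝ :=
  (Real.sqrt (2 * π))⁻¹ * ∫ u in Set.Iic x, Real.exp (-u ^ 2 / 2)

theorem gaussian_cdf_bounds (x : ℝ) (hx : 0 ≤ x) :
    1 - Real.exp (-x ^ 2 / 2) / Real.sqrt (2 * π) *
        (2 / (x + Real.sqrt (x ^ 2 + 8 / π))) ≤ Phi x ∧
    Phi x ≤ 1 - Real.exp (-x ^ 2 / 2) / Real.sqrt (2 * π) *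
        (2 / (x + Real.sqrt (x ^ 2 + 4))) := by
  have hπ := pi_pos
  have h2π : (0:ℝ) < 2 * π := by positivity
  have hs2π : (0:ℝ) < Real.sqrt (2 * π) := Real.sqrt_pos.mpr h2π
  set Q : ℝ := ∫ u in Ioi x, Real.exp (-u ^ 2 / 2) with hQdef
  have hQpos : 0 < Q := Q_pos x
  set E : ℝ := Real.exp (-x ^ 2 / 2) with hEdef
  have hEpos : 0 < E := Real.exp_pos _
  have hPhi : Phi x = 1 - Q / Real.sqrt (2 * π) := by
    rw [Phi]
    have hIic : ∫ u in Iic x, Real.exp (-u ^ 2 / 2) = Real.sqrt (2 * π) - Q := by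
      have h := intervalIntegral.integral_Iic_add_Ioi (b := x) int_gauss.integrableOn int_gauss.integrableOn
      rw [gauss_total, ← hQdef] at h
      linarith
    rw [hIic]
    field_simp
  constructor
  · -- lower bound : uses polar_final
    set s : ℝ := Real.sqrt (x ^ 2 + 8 / π) with hsdef
    have hs : s ^ 2 = x ^ 2 + 8 / π := Real.sq_sqrt (by positivity)
    have hspos : 0 < s := Real.sqrt_pos.mpr (by positivity)
    have hsx : x < s := by nlinarith [div_pos (show (0:ℝ) < 8 by norm_num) hπ]
    have hxs : 0 < x + s := by linarith
    have hpf := polar_final x hx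
    have key : Q ≤ E * (2 / (x + s)) := by
      rw [mul_div_assoc' E 2 (x + s), le_div_iff₀ hxs]
      have h4B : (2*E - Q*x - Q*s) * (2*E - Q*x + Q*s)
          = 4 * (E^2 - (2/π)*Q^2 - x*E*Q) := by
        linear_combination (-(Q^2)) * hs
      have hpos2 : 0 < 2*E - Q*x + Q*s := by nlinarith
      nlinarith [h4B, hpf, hpos2]
    rw [hPhi]
    have : E / Real.sqrt (2 * π) * (2 / (x + s)) = (E * (2 / (x + s))) / Real.sqrt (2 * π) := by
      ring
    rw [this]
    have hdiv : Q / Real.sqrt (2 * π) ≤ (E * (2 / (x + s))) / Real.sqrt (2 * π) := by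
      gcongr
    linarith
  · -- upper bound : uses cs_bound
    set s : ℝ := Real.sqrt (x ^ 2 + 4) with hsdef
    have hs : s ^ 2 = x ^ 2 + 4 := Real.sq_sqrt (by positivity)
    have hspos : 0 < s := Real.sqrt_pos.mpr (by positivity)
    have hsx : x < s := by nlinarith
    have hxs : 0 < x + s := by linarith
    have hcs := cs_bound x hx
    have key : E * (2 / (x + s)) ≤ Q := by
      rw [mul_div_assoc' E 2 (x + s), div_le_iff₀ hxs]
      have h4A : (Q*s + Q*x - 2*E) * (Q*s + 2*E - Q*x)
          = 4 * (Q^2 + x*E*Q - E^2) := by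
        linear_combination Q^2 * hs
      have hpos2 : 0 < Q*s + 2*E - Q*x := by nlinarith
      nlinarith [h4A, hcs, hpos2]
    rw [hPhi]
    have : E / Real.sqrt (2 * π) * (2 / (x + s)) = (E * (2 / (x + s))) / Real.sqrt (2 * π) := by
      ring
    rw [this]
    have hdiv : (E * (2 / (x + s))) / Real.sqrt (2 * π) ≤ Q / Real.sqrt (2 * π) := by
      gcongr
    linarith
end

section
/- For every integer K ≥ 5 and every η ≥ 1, Φ(Φ⁻¹(1 - 1/K) + η) ≥ 1 - (1/K)·√(π/2)·e^{-η²/2}·e^{-η·√(log(K²/(4π log K)))}. -/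
set_option maxHeartbeats 1000000

open Real Set

/-- The inverse of the standard normal cdf. -/
noncomputable def PhiInv : ℝ → ℝ := Function.invFun Phi

section GaussAux

open MeasureTheory Filter

/-- The Gaussian density (unnormalized). -/
noncomputable def gf (u : ℝ) : ℝ := Real.exp (-u ^ 2 / 2)

lemma gf_integrable : Integrable gf := by
  have h := integrable_exp_neg_mul_sq (by norm_num : (0:ℝ) < 1/2)
  convert h using 2 with x
  unfold gf; ring_nf

lemma gf_cont : Continuous gf := by unfold gf; continuity

lemma gf_split (x : ℝ) : (∫ u in Iic x, gf u) + (∫ u in Ioi x, gf u) = ∫ u : ℝ, gf u := by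
  rw [← setIntegral_union (Iic_disjoint_Ioi le_rfl) measurableSet_Ioi
    gf_integrable.integrableOn gf_integrable.integrableOn, Iic_union_Ioi]
  simp [Measure.restrict_univ]

lemma hasDerivAt_I (x : ℝ) : HasDerivAt (fun y => ∫ u in Iic y, gf u) (gf x) x := by
  have key : ∀ y : ℝ, (∫ u in Iic y, gf u) = (∫ u in Iic 0, gf u) + ∫ u in (0:ℝ)..y, gf u := by
    intro y
    have := intervalIntegral.integral_Iic_sub_Iic (f := gf) (μ := volume) (a := 0) (b := y)
      gf_integrable.integrableOn gf_integrable.integrableOn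
    linarith
  have h2 : HasDerivAt (fun y => ∫ u in (0:ℝ)..y, gf u) (gf x) x :=
    intervalIntegral.integral_hasDerivAt_right gf_integrable.intervalIntegrable
      gf_cont.aestronglyMeasurable.stronglyMeasurableAtFilter gf_cont.continuousAt
  have := (h2.const_add (∫ u in Iic 0, gf u))
  refine this.congr_of_eventuallyEq ?_
  filter_upwards [] with y
  exact key y

lemma I_tendsto_top : Tendsto (fun y => ∫ u in Iic y, gf u) atTop (nhds (∫ u : ℝ, gf u)) := by
  have h := tendsto_setIntegral_of_monotone (s := fun y : ℝ => Iic y)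
    (fun i => measurableSet_Iic) (fun a b hab => Iic_subset_Iic.2 hab)
    (by rw [iUnion_Iic] ; exact gf_integrable.integrableOn)
  rwa [iUnion_Iic, Measure.restrict_univ] at h

lemma I_tendsto_bot : Tendsto (fun y => ∫ u in Iic y, gf u) atBot (nhds 0) := by
  have h := tendsto_setIntegral_of_antitone (s := fun y : ℝ => Iic (-y))
    (fun i => measurableSet_Iic) (fun a b hab => Iic_subset_Iic.2 (by linarith))
    ⟨0, gf_integrable.integrableOn⟩
  have he : ⋂ y : ℝ, Iic (-y) = ∅ := by
    ext x; simp only [mem_iInter, mem_Iic, mem_empty_iff_false, iff_false, not_forall]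
    exact ⟨-(x - 1), by push_neg; linarith⟩
  rw [he] at h
  simp only [Measure.restrict_empty, integral_zero_measure] at h
  have hneg : Tendsto (fun y : ℝ => -y) atBot atTop := tendsto_neg_atBot_atTop
  have := h.comp hneg
  refine this.congr fun y => ?_
  simp [Function.comp]

lemma T_tendsto_top : Tendsto (fun y => ∫ u in Ioi y, gf u) atTop (nhds 0) := by
  have h := tendsto_setIntegral_of_antitone (s := fun y : ℝ => Ioi y)
    (fun i => measurableSet_Ioi) (fun a b hab => Ioi_subset_Ioi hab)
    ⟨0, gf_integrable.integrableOn⟩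
  have he : ⋂ y : ℝ, Ioi y = ∅ := by
    ext x; simp only [mem_iInter, mem_Ioi, mem_empty_iff_false, iff_false, not_forall]
    exact ⟨x, lt_irrefl x⟩
  rw [he] at h
  simpa using h

lemma gf_total : ∫ u : ℝ, gf u = Real.sqrt (2 * π) := by
  have h := integral_gaussian (1/2 : ℝ)
  have h2 : (π / (1/2 : ℝ)) = 2 * π := by ring
  rw [h2] at h
  rw [← h]
  congr 1 with x
  unfold gf; ring_nf

end GaussAux

section PhiAux

open MeasureTheory Filter

/-- The tail integral. -/
noncomputable def Tf (x : ℝ) : ℝ := ∫ u in Ioi x, gf u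

/-- The Birnbaum lower bound function. -/
noncomputable def bg (x : ℝ) : ℝ := gf x * ((Real.sqrt (x ^ 2 + 4) - x) / 2)

lemma sqrt2pi_pos : 0 < Real.sqrt (2 * π) := Real.sqrt_pos.2 (by positivity)

lemma Phi_eq (x : ℝ) : Phi x = (Real.sqrt (2 * π))⁻¹ * ∫ u in Iic x, gf u := rfl

lemma hasDerivAt_Phi (x : ℝ) :
    HasDerivAt Phi ((Real.sqrt (2 * π))⁻¹ * gf x) x := by
  have := (hasDerivAt_I x).const_mul (Real.sqrt (2 * π))⁻¹
  exact this

lemma Phi_strictMono : StrictMono Phi := by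
  apply strictMono_of_deriv_pos
  intro x
  rw [(hasDerivAt_Phi x).deriv]
  have := Real.exp_pos (-x ^ 2 / 2)
  have h2 := sqrt2pi_pos
  unfold gf
  positivity

lemma Phi_continuous : Continuous Phi := by
  apply continuous_iff_continuousAt.2
  intro x
  exact (hasDerivAt_Phi x).continuousAt

lemma Phi_tendsto_top : Tendsto Phi atTop (nhds 1) := by
  have h := I_tendsto_top.const_mul (Real.sqrt (2 * π))⁻¹
  rw [gf_total, inv_mul_cancel₀ (ne_of_gt sqrt2pi_pos)] at h
  exact h

lemma Phi_tendsto_bot : Tendsto Phi atBot (nhds 0) := by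
  have h := I_tendsto_bot.const_mul (Real.sqrt (2 * π))⁻¹
  rw [mul_zero] at h
  exact h

lemma Phi_surj {p : ℝ} (hp0 : 0 < p) (hp1 : p < 1) : ∃ c, Phi c = p := by
  have ha : ∀ᶠ x in atBot, Phi x < p := Phi_tendsto_bot.eventually (eventually_lt_nhds hp0)
  have hb : ∀ᶠ x in atTop, p < Phi x := Phi_tendsto_top.eventually (eventually_gt_nhds hp1)
  obtain ⟨a, ha⟩ := ha.exists
  obtain ⟨b, hb⟩ := hb.exists
  have hab : a ≤ b := by
    by_contra hc
    push_neg at hc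
    have := Phi_strictMono hc
    linarith
  have := intermediate_value_Icc hab Phi_continuous.continuousOn
  have hmem : p ∈ Icc (Phi a) (Phi b) := ⟨le_of_lt ha, le_of_lt hb⟩
  obtain ⟨c, _, hc⟩ := this hmem
  exact ⟨c, hc⟩

lemma Phi_PhiInv {p : ℝ} (hp0 : 0 < p) (hp1 : p < 1) : Phi (PhiInv p) = p := by
  obtain ⟨c, hc⟩ := Phi_surj hp0 hp1
  exact Function.invFun_eq ⟨c, hc⟩

lemma Phi_one_sub_T (x : ℝ) :
    Phi x = 1 - (Real.sqrt (2 * π))⁻¹ * Tf x := by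
  rw [Phi_eq]
  have h := gf_split x
  rw [gf_total] at h
  have h2 : (∫ u in Iic x, gf u) = Real.sqrt (2 * π) - ∫ u in Ioi x, gf u := by linarith
  rw [h2, mul_sub, inv_mul_cancel₀ (ne_of_gt sqrt2pi_pos)]
  rfl

lemma tail_translate (z η : ℝ) :
    (∫ u in Ioi (z + η), gf u) = ∫ t in Ioi z, gf (t + η) := by
  have hmp : MeasurePreserving (fun t : ℝ => t + η) volume volume :=
    measurePreserving_add_right volume η
  have hemb : MeasurableEmbedding (fun t : ℝ => t + η) :=
    (Homeomorph.addRight η).isClosedEmbedding.measurableEmbedding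
  have h := hmp.setIntegral_preimage_emb hemb gf (Ioi (z + η))
  rw [← h]
  congr 1
  ext t
  simp [mem_Ioi]

lemma tail_shift_bound (z : ℝ) {η : ℝ} (hη : 0 ≤ η) :
    Tf (z + η) ≤ Real.exp (-η * z - η ^ 2 / 2) * Tf z := by
  unfold Tf
  rw [tail_translate]
  have hint1 : IntegrableOn (fun t => gf (t + η)) (Ioi z) := by
    have : Integrable (fun t : ℝ => gf (t + η)) := gf_integrable.comp_add_right η
    exact this.integrableOn
  have hint2 : IntegrableOn (fun t => Real.exp (-η * z - η ^ 2 / 2) * gf t) (Ioi z) :=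
    (gf_integrable.const_mul _).integrableOn
  have hmono : ∀ t ∈ Ioi z, gf (t + η) ≤ Real.exp (-η * z - η ^ 2 / 2) * gf t := by
    intro t ht
    rw [mem_Ioi] at ht
    unfold gf
    rw [← Real.exp_add]
    apply Real.exp_le_exp.2
    nlinarith [mul_le_mul_of_nonneg_left (le_of_lt ht) hη]
  calc (∫ t in Ioi z, gf (t + η)) ≤ ∫ t in Ioi z, Real.exp (-η * z - η ^ 2 / 2) * gf t :=
        setIntegral_mono_on hint1 hint2 measurableSet_Ioi hmono
    _ = Real.exp (-η * z - η ^ 2 / 2) * ∫ t in Ioi z, gf t := by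
        rw [integral_const_mul]

lemma hasDerivAt_Tf (x : ℝ) : HasDerivAt Tf (-gf x) x := by
  have key : ∀ y, Tf y = (∫ u : ℝ, gf u) - ∫ u in Iic y, gf u := by
    intro y
    have := gf_split y
    unfold Tf
    linarith
  have h := (hasDerivAt_const x (∫ u : ℝ, gf u)).sub (hasDerivAt_I x)
  rw [zero_sub] at h
  exact h.congr_of_eventuallyEq (by filter_upwards [] with y; exact key y)

lemma hasDerivAt_gf (x : ℝ) : HasDerivAt gf (gf x * (-x)) x := by
  have hin : HasDerivAt (fun y : ℝ => -y ^ 2 / 2) (-x) x := by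
    have := ((hasDerivAt_pow 2 x).neg).div_const 2
    refine this.congr_deriv ?_
    push_cast
    ring
  have := hin.exp
  exact this.congr_of_eventuallyEq (by filter_upwards [] with y; rfl)
    |>.congr_deriv (by unfold gf; ring)

lemma hasDerivAt_sq4 (x : ℝ) :
    HasDerivAt (fun y : ℝ => Real.sqrt (y ^ 2 + 4)) (x / Real.sqrt (x ^ 2 + 4)) x := by
  have hpos : (0:ℝ) < x ^ 2 + 4 := by positivity
  have hin : HasDerivAt (fun y : ℝ => y ^ 2 + 4) (2 * x) x := by
    have := (hasDerivAt_pow 2 x).add_const 4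
    refine this.congr_deriv ?_
    push_cast; ring
  have := hin.sqrt (ne_of_gt hpos)
  convert this using 1
  field_simp

lemma hasDerivAt_bg (x : ℝ) :
    HasDerivAt bg (gf x * (-x) * ((Real.sqrt (x ^ 2 + 4) - x) / 2)
      + gf x * ((x / Real.sqrt (x ^ 2 + 4) - 1) / 2)) x := by
  have h := (hasDerivAt_gf x).mul (((hasDerivAt_sq4 x).sub (hasDerivAt_id x)).div_const 2)
  simp only [Pi.sub_apply, id_eq] at h
  exact h.congr_deriv (by ring)

lemma hasDerivAt_h (x : ℝ) :
    HasDerivAt (fun y => Tf y - bg y)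
      (-gf x - (gf x * (-x) * ((Real.sqrt (x ^ 2 + 4) - x) / 2)
        + gf x * ((x / Real.sqrt (x ^ 2 + 4) - 1) / 2))) x :=
  (hasDerivAt_Tf x).sub (hasDerivAt_bg x)

lemma deriv_h_nonpos {x : ℝ} (hx : 0 ≤ x) :
    deriv (fun y => Tf y - bg y) x ≤ 0 := by
  rw [(hasDerivAt_h x).deriv]
  set s := Real.sqrt (x ^ 2 + 4) with hs
  have hs2 : s ^ 2 = x ^ 2 + 4 := Real.sq_sqrt (by positivity)
  have hs0 : 0 < s := Real.sqrt_pos.2 (by positivity)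
  have hgf : 0 < gf x := Real.exp_pos _
  have hkey : x ^ 3 + 3 * x ≤ s * (x ^ 2 + 1) := by
    have ha : (0:ℝ) ≤ s * (x ^ 2 + 1) := by positivity
    have hsq : (x ^ 3 + 3 * x) ^ 2 < (s * (x ^ 2 + 1)) ^ 2 := by
      have h2 : (s * (x ^ 2 + 1)) ^ 2 = (x ^ 2 + 4) * (x ^ 2 + 1) ^ 2 := by
        rw [mul_pow, hs2]
      rw [h2]; nlinarith [sq_nonneg x]
    exact le_of_lt (lt_of_pow_lt_pow_left₀ 2 ha hsq)
  have heq : -gf x - (gf x * (-x) * ((s - x) / 2) + gf x * ((x / s - 1) / 2))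
      = gf x / (2 * s) * ((x ^ 3 + 3 * x) - s * (x ^ 2 + 1)) := by
    field_simp
    linear_combination x * hs2
  rw [heq]
  apply mul_nonpos_of_nonneg_of_nonpos
  · positivity
  · linarith

lemma gf_tendsto_top : Tendsto gf atTop (nhds 0) := by
  have h1 : Tendsto (fun x : ℝ => -x ^ 2 / 2) atTop atBot := by
    apply Tendsto.atBot_div_const (by norm_num : (0:ℝ) < 2)
    exact tendsto_neg_atTop_atBot.comp (tendsto_pow_atTop (by norm_num : 2 ≠ 0))
  exact Real.tendsto_exp_atBot.comp h1

lemma bg_tendsto_top : Tendsto bg atTop (nhds 0) := by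
  apply tendsto_of_tendsto_of_tendsto_of_le_of_le' tendsto_const_nhds gf_tendsto_top
  · filter_upwards [eventually_ge_atTop (0:ℝ)] with x hx
    have hs : x ≤ Real.sqrt (x ^ 2 + 4) := by
      calc x = Real.sqrt (x ^ 2) := (Real.sqrt_sq hx).symm
        _ ≤ Real.sqrt (x ^ 2 + 4) := Real.sqrt_le_sqrt (by linarith)
    have hgf : (0:ℝ) ≤ gf x := (Real.exp_pos _).le
    unfold bg
    apply mul_nonneg hgf
    linarith
  · filter_upwards [eventually_ge_atTop (0:ℝ)] with x hx
    have hs : Real.sqrt (x ^ 2 + 4) ≤ x + 2 := by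
      calc Real.sqrt (x ^ 2 + 4) ≤ Real.sqrt ((x + 2) ^ 2) :=
            Real.sqrt_le_sqrt (by nlinarith)
        _ = x + 2 := Real.sqrt_sq (by linarith)
    have hgf : (0:ℝ) ≤ gf x := (Real.exp_pos _).le
    unfold bg
    calc gf x * ((Real.sqrt (x ^ 2 + 4) - x) / 2) ≤ gf x * 1 := by
          apply mul_le_mul_of_nonneg_left _ hgf
          linarith
      _ = gf x := mul_one _

lemma birnbaum {x : ℝ} (hx : 0 ≤ x) : bg x ≤ Tf x := by
  have hanti : AntitoneOn (fun y => Tf y - bg y) (Ici 0) := by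
    apply antitoneOn_of_deriv_nonpos (convex_Ici 0)
    · intro y _
      exact ((hasDerivAt_Tf y).sub (hasDerivAt_bg y)).continuousAt.continuousWithinAt
    · intro y hy
      exact ((hasDerivAt_h y).differentiableAt).differentiableWithinAt
    · intro y hy
      rw [interior_Ici] at hy
      exact deriv_h_nonpos (le_of_lt hy)
  have hlim : Tendsto (fun y => Tf y - bg y) atTop (nhds 0) := by
    have := T_tendsto_top.sub bg_tendsto_top
    simpa [Tf] using this
  have hge : 0 ≤ Tf x - bg x := by
    apply le_of_tendsto hlim
    filter_upwards [eventually_ge_atTop x, eventually_ge_atTop (0:ℝ)] with y hy hy0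
    exact hanti hx (by exact hy0) hy
  linarith

lemma log_K_gt_one {K : ℝ} (hK : 5 ≤ K) : 1 < Real.log K := by
  rw [Real.lt_log_iff_exp_lt (by linarith)]
  nlinarith [Real.exp_one_lt_d9]

lemma fourPiL_lt_Ksq {K : ℝ} (hK : 5 ≤ K) : 4 * π * Real.log K < K ^ 2 := by
  have hK0 : (0:ℝ) < K := by linarith
  have he : (0:ℝ) < Real.exp 1 := Real.exp_pos 1
  have hlogle : Real.log K ≤ K / Real.exp 1 := by
    have h1 : Real.log (K / Real.exp 1) ≤ K / Real.exp 1 - 1 :=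
      Real.log_le_sub_one_of_pos (by positivity)
    rw [Real.log_div (ne_of_gt hK0) (ne_of_gt he), Real.log_exp] at h1
    linarith
  have h4pi : 4 * π < 5 * Real.exp 1 := by
    nlinarith [Real.pi_lt_d2, Real.exp_one_gt_d9]
  have hπ : (0:ℝ) < π := Real.pi_pos
  have hL : 0 < Real.log K := by linarith [log_K_gt_one hK]
  calc 4 * π * Real.log K ≤ 4 * π * (K / Real.exp 1) := by
        apply mul_le_mul_of_nonneg_left hlogle (by positivity)
    _ < 5 * K := by
        have heq : 4 * π * (K / Real.exp 1) = (4 * π / Real.exp 1) * K := by ring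
        rw [heq]
        apply mul_lt_mul_of_pos_right _ hK0
        rw [div_lt_iff₀ he]
        linarith
    _ ≤ K ^ 2 := by nlinarith

lemma tail_at_b {K : ℝ} (hK : 5 ≤ K) :
    Real.sqrt (2 * π) * (1 / K) ≤
      Tf (Real.sqrt (Real.log (K ^ 2 / (4 * π * Real.log K)))) := by
  have hK0 : (0:ℝ) < K := by linarith
  have hπ : (0:ℝ) < π := Real.pi_pos
  have hL1 : 1 < Real.log K := log_K_gt_one hK
  set L := Real.log K with hLdef
  have hL0 : 0 < L := by linarith
  have h4L : (0:ℝ) < 4 * π * L := by positivity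
  have hA1 : 1 < K ^ 2 / (4 * π * L) := by
    rw [lt_div_iff₀ h4L]
    simpa using fourPiL_lt_Ksq hK
  set A := K ^ 2 / (4 * π * L) with hAdef
  have hlogA : 0 < Real.log A := Real.log_pos hA1
  set b := Real.sqrt (Real.log A) with hbdef
  have hb0 : 0 ≤ b := Real.sqrt_nonneg _
  have hb2 : b ^ 2 = Real.log A := Real.sq_sqrt hlogA.le
  have hlogA_eq : Real.log A = 2 * L - Real.log (4 * π * L) := by
    rw [hAdef, Real.log_div (by positivity) (ne_of_gt h4L), Real.log_pow]
    push_cast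
    ring
  have hlog4pi : 2 ≤ Real.log (4 * π * L) := by
    rw [← Real.log_exp 2]
    apply Real.log_le_log (Real.exp_pos 2)
    have he2 : Real.exp 2 = Real.exp 1 * Real.exp 1 := by
      rw [← Real.exp_add]; norm_num
    have h12 : (12:ℝ) ≤ 4 * π * L := by nlinarith [Real.pi_gt_three]
    nlinarith [Real.exp_one_lt_d9, Real.exp_pos 1]
  have hkey1 : 2 * L * b ^ 2 ≤ (2 * L - 1) ^ 2 := by
    rw [hb2, hlogA_eq]
    nlinarith
  set q := Real.sqrt (4 * π * L) with hqdef
  set p2 := Real.sqrt (2 * π) with hpdef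
  set sb := Real.sqrt (b ^ 2 + 4) with hsbdef
  have hq2 : q ^ 2 = 4 * π * L := Real.sq_sqrt h4L.le
  have hp2 : p2 ^ 2 = 2 * π := Real.sq_sqrt (by positivity)
  have hsb2 : sb ^ 2 = b ^ 2 + 4 := Real.sq_sqrt (by positivity)
  have hq0 : 0 ≤ q := Real.sqrt_nonneg _
  have hp0 : 0 ≤ p2 := Real.sqrt_nonneg _
  have hsb0 : 0 ≤ sb := Real.sqrt_nonneg _
  have hgfb : gf b = q / K := by
    have hw : (0:ℝ) < q / K := by
      have : (0:ℝ) < q := Real.sqrt_pos.2 h4L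
      positivity
    rw [← Real.exp_log hw]
    unfold gf
    congr 1
    rw [Real.log_div (by positivity) (ne_of_gt hK0), hqdef, Real.log_sqrt h4L.le,
      hb2, hlogA_eq]
    ring
  have hstep1 : 4 * (p2 * q * b) ≤ 16 * π * L - 8 * π := by
    have hrhs0 : 0 ≤ 16 * π * L - 8 * π := by nlinarith
    have hsq : (4 * (p2 * q * b)) ^ 2 ≤ (16 * π * L - 8 * π) ^ 2 := by
      have hexp : (4 * (p2 * q * b)) ^ 2 = 16 * (2 * π) * (4 * π * L) * b ^ 2 := by
        rw [← hp2, ← hq2]; ring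
      rw [hexp]
      nlinarith [mul_le_mul_of_nonneg_left hkey1 (by positivity : (0:ℝ) ≤ 64 * π ^ 2)]
    exact le_of_pow_le_pow_left₀ (by norm_num) hrhs0 hsq
  have hstep2 : 2 * p2 + q * b ≤ q * sb := by
    have hsq : (2 * p2 + q * b) ^ 2 ≤ (q * sb) ^ 2 := by
      have h1 : (2 * p2 + q * b) ^ 2 = 4 * (2 * π) + 4 * (p2 * q * b) + (4 * π * L) * b ^ 2 := by
        rw [← hp2, ← hq2]; ring
      have h2 : (q * sb) ^ 2 = (4 * π * L) * (b ^ 2 + 4) := by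
        rw [mul_pow, hq2, hsb2]
      rw [h1, h2]
      have hx : (4 * π * L) * (b ^ 2 + 4) = (4 * π * L) * b ^ 2 + 16 * (π * L) := by ring
      have hy : (16:ℝ) * π * L = 16 * (π * L) := by ring
      rw [hx]
      rw [hy] at hstep1
      linarith [hstep1]
    exact le_of_pow_le_pow_left₀ (by norm_num) (by positivity) hsq
  have hbg : p2 / K ≤ bg b := by
    unfold bg
    rw [hgfb, ← hsbdef]
    have key : p2 ≤ q * ((sb - b) / 2) := by
      have hq2' : q * ((sb - b) / 2) = (q * sb - q * b) / 2 := by ring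
      rw [hq2']
      linarith
    calc p2 / K = p2 * (1 / K) := by ring
      _ ≤ (q * ((sb - b) / 2)) * (1 / K) := mul_le_mul_of_nonneg_right key (by positivity)
      _ = q / K * ((sb - b) / 2) := by ring
  calc p2 * (1 / K) = p2 / K := by ring
    _ ≤ bg b := hbg
    _ ≤ Tf b := birnbaum hb0

end PhiAux

theorem phi_shift_lower_bound_K (K : ℕ) (hK : 5 ≤ K) (η : ℝ) (hη : 1 ≤ η) :
    Phi (PhiInv (1 - 1 / (K : ℝ)) + η) ≥
      1 - (1 / (K : ℝ)) * Real.sqrt (π / 2) * Real.exp (-η ^ 2 / 2) *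
        Real.exp (-η * Real.sqrt (Real.log ((K : ℝ) ^ 2 / (4 * π * Real.log K)))) := by
  have hK5 : (5:ℝ) ≤ (K:ℝ) := by exact_mod_cast hK
  have hK0 : (0:ℝ) < (K:ℝ) := by linarith
  have hp0 : 0 < 1 - 1 / (K:ℝ) := by
    have : 1 / (K:ℝ) ≤ 1 / 5 := by
      apply div_le_div_of_nonneg_left (by norm_num) (by norm_num) hK5
    linarith
  have hp1 : 1 - 1 / (K:ℝ) < 1 := by
    have : 0 < 1 / (K:ℝ) := by positivity
    linarith
  set z := PhiInv (1 - 1 / (K:ℝ)) with hzdef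
  have hPz : Phi z = 1 - 1 / (K:ℝ) := Phi_PhiInv hp0 hp1
  set b := Real.sqrt (Real.log ((K:ℝ) ^ 2 / (4 * π * Real.log K))) with hbdef
  have htb : Real.sqrt (2 * π) * (1 / (K:ℝ)) ≤ Tf b := tail_at_b hK5
  have hc := sqrt2pi_pos
  have hPhib : Phi b ≤ 1 - 1 / (K:ℝ) := by
    rw [Phi_one_sub_T]
    have h1 : 1 / (K:ℝ) ≤ (Real.sqrt (2 * π))⁻¹ * Tf b := by
      have h2 := mul_le_mul_of_nonneg_left htb
        (by positivity : (0:ℝ) ≤ (Real.sqrt (2 * π))⁻¹)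
      rwa [← mul_assoc, inv_mul_cancel₀ (ne_of_gt hc), one_mul] at h2
    linarith
  have hbz : b ≤ z := by
    apply Phi_strictMono.le_iff_le.mp
    rw [hPz]
    exact hPhib
  have hTz : Tf z = Real.sqrt (2 * π) * (1 / (K:ℝ)) := by
    have h := Phi_one_sub_T z
    rw [hPz] at h
    have h2 : (Real.sqrt (2 * π))⁻¹ * Tf z = 1 / (K:ℝ) := by linarith
    calc Tf z = Real.sqrt (2 * π) * ((Real.sqrt (2 * π))⁻¹ * Tf z) := by
          rw [← mul_assoc, mul_inv_cancel₀ (ne_of_gt hc), one_mul]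
      _ = Real.sqrt (2 * π) * (1 / (K:ℝ)) := by rw [h2]
  have hshift : Tf (z + η) ≤ Real.exp (-η * z - η ^ 2 / 2) * Tf z :=
    tail_shift_bound z (by linarith : (0:ℝ) ≤ η)
  rw [ge_iff_le, Phi_one_sub_T (z + η)]
  have hsqpi2 : 1 ≤ Real.sqrt (π / 2) := by
    rw [show (1:ℝ) = Real.sqrt 1 from (Real.sqrt_one).symm]
    apply Real.sqrt_le_sqrt
    nlinarith [Real.pi_gt_three]
  have hfinal : (Real.sqrt (2 * π))⁻¹ * Tf (z + η) ≤
      1 / (K:ℝ) * Real.sqrt (π / 2) * Real.exp (-η ^ 2 / 2) * Real.exp (-η * b) := by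
    calc (Real.sqrt (2 * π))⁻¹ * Tf (z + η)
        ≤ (Real.sqrt (2 * π))⁻¹ * (Real.exp (-η * z - η ^ 2 / 2) *
            (Real.sqrt (2 * π) * (1 / (K:ℝ)))) := by
          apply mul_le_mul_of_nonneg_left _ (by positivity)
          rw [← hTz]
          exact hshift
      _ = 1 / (K:ℝ) * Real.exp (-η ^ 2 / 2) * Real.exp (-η * z) := by
          rw [show -η * z - η ^ 2 / 2 = (-η ^ 2 / 2) + (-η * z) from by ring, Real.exp_add]
          field_simp
      _ ≤ 1 / (K:ℝ) * Real.sqrt (π / 2) * Real.exp (-η ^ 2 / 2) * Real.exp (-η * b) := by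
          have hez : Real.exp (-η * z) ≤ Real.exp (-η * b) := by
            apply Real.exp_le_exp.2
            nlinarith
          calc 1 / (K:ℝ) * Real.exp (-η ^ 2 / 2) * Real.exp (-η * z)
              ≤ 1 / (K:ℝ) * Real.exp (-η ^ 2 / 2) * Real.exp (-η * b) := by
                apply mul_le_mul_of_nonneg_left hez (by positivity)
            _ ≤ 1 / (K:ℝ) * Real.sqrt (π / 2) * Real.exp (-η ^ 2 / 2) * Real.exp (-η * b) := by
                have hpos : (0:ℝ) ≤ 1 / (K:ℝ) * Real.exp (-η ^ 2 / 2) * Real.exp (-η * b) := by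
                  positivity
                nlinarith [mul_le_mul_of_nonneg_right hsqpi2 hpos]
  linarith
end

section
/- Let g : Z → X be a map between metric spaces (X a normed space) and f : X → {1,...,K} a classifier. Define f̃(x) = f(g(z*)) where z* minimizes z ↦ ‖g(z) - x‖ (assume the minimum exists). Then for every z ∈ Z, the in-distribution robustness of f at g(z) is at most twice the unconstrained robustness of f̃ at g(z): min{‖g(z+r) - g(z)‖ : f̃(g(z+r)) ≠ f̃(g(z))} ≤ 2·min{‖v‖ : f̃(g(z)+v) ≠ f̃(g(z))}. -/
/-- Nearest-neighbour classifier: the in-distribution robustness of `f̃` at `g z` is at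
most twice its unconstrained robustness. -/
theorem in_distribution_robustness_le_two_mul_unconstrained
    {Z : Type*} [AddCommGroup Z] {X : Type*} [NormedAddCommGroup X]
    {K : ℕ} (g : Z → X) (f : X → Fin K) (ftil : X → Fin K)
    -- `f̃(x) = f(g(z*))` where `z*` minimizes `z ↦ ‖g z - x‖` (the minimum exists):
    (hftil : ∀ x : X, ∃ zstar : Z,
      (∀ z : Z, ‖g zstar - x‖ ≤ ‖g z - x‖) ∧ ftil x = f (g zstar))
    (z : Z)
    -- the unconstrained robustness set is nonempty:
    (hne : ∃ v : X, ftil (g z + v) ≠ ftil (g z)) :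
    sInf {t : ℝ | ∃ r : Z, ftil (g (z + r)) ≠ ftil (g z) ∧ t = ‖g (z + r) - g z‖} ≤
      2 * sInf {t : ℝ | ∃ v : X, ftil (g z + v) ≠ ftil (g z) ∧ t = ‖v‖} := by
  set A := {t : ℝ | ∃ r : Z, ftil (g (z + r)) ≠ ftil (g z) ∧ t = ‖g (z + r) - g z‖}
  set B := {t : ℝ | ∃ v : X, ftil (g z + v) ≠ ftil (g z) ∧ t = ‖v‖}
  -- ftil agrees with f on the image of g
  have hagree : ∀ y : Z, ftil (g y) = f (g y) := by
    intro y
    obtain ⟨w, hw, hfw⟩ := hftil (g y)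
    have h0 : ‖g w - g y‖ ≤ 0 := by simpa using hw y
    have : g w = g y := by
      have := le_antisymm h0 (norm_nonneg _)
      rwa [norm_eq_zero, sub_eq_zero] at this
    rw [hfw, this]
  have hAbdd : BddBelow A := ⟨0, fun t ht => by obtain ⟨r, _, rfl⟩ := ht; positivity⟩
  have hBne : B.Nonempty := by obtain ⟨v, hv⟩ := hne; exact ⟨‖v‖, v, hv, rfl⟩
  -- key: for every b ∈ B there is a ∈ A with a ≤ 2b
  have key : ∀ b ∈ B, sInf A ≤ 2 * b := by
    rintro b ⟨v, hv, rfl⟩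
    obtain ⟨zs, hzs, hfzs⟩ := hftil (g z + v)
    have hne' : ftil (g (z + (zs - z))) ≠ ftil (g z) := by
      have : z + (zs - z) = zs := by abel
      rw [this, hagree zs, ← hfzs]
      exact hv
    have hmem : ‖g (z + (zs - z)) - g z‖ ∈ A := ⟨zs - z, hne', rfl⟩
    refine (csInf_le hAbdd hmem).trans ?_
    have hz2 : z + (zs - z) = zs := by abel
    rw [hz2]
    have h1 : ‖g zs - (g z + v)‖ ≤ ‖g z - (g z + v)‖ := hzs z
    calc ‖g zs - g z‖ = ‖(g zs - (g z + v)) + v‖ := by congr 1; abel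
      _ ≤ ‖g zs - (g z + v)‖ + ‖v‖ := norm_add_le _ _
      _ ≤ ‖g z - (g z + v)‖ + ‖v‖ := by linarith
      _ = 2 * ‖v‖ := by simp [two_mul]
  have : sInf A / 2 ≤ sInf B := le_csInf hBne fun b hb => by linarith [key b hb]
  linarith
end

section
/- (Checkerboard lower bound) Let ν be the standard Gaussian on ℝ^d and B₁ = {z ∈ ℝ^d : Σᵢ ⌊zᵢ⌋ is even}, B₂ = ℝ^d \ B₁. Then for every η ∈ [0, 1/2], ν({z ∈ B₁ : dist(z,B₂) ≤ η}) + ν({z ∈ B₂ : dist(z,B₁) ≤ η}) ≥ 1 - (1-η)^d. -/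
open Real Set MeasureTheory ProbabilityTheory

/-- The standard Gaussian measure `N(0, I_d)` on `ℝ^d`. -/
noncomputable def stdGaussian (d : ℕ) : Measure (Fin d → ℝ) :=
  Measure.pi fun _ => gaussianReal 0 1

/-- The Euclidean (ℓ₂) norm on `ℝ^d`. -/
noncomputable def l2 {d : ℕ} (z : Fin d → ℝ) : ℝ := Real.sqrt (∑ i, z i ^ 2)

/-- The ℓ₂ distance from a point to a set. -/
noncomputable def distSet {d : ℕ} (z : Fin d → ℝ) (A : Set (Fin d → ℝ)) : ℝ :=
  sInf {t | ∃ z' ∈ A, t = l2 (z - z')}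

/-! ### Auxiliary lemmas -/

noncomputable def ckbGauss : ℝ → ℝ := gaussianPDFReal 0 1

lemma ckbGauss_nonneg (x : ℝ) : 0 ≤ ckbGauss x := gaussianPDFReal_nonneg 0 1 x

lemma ckbGauss_anti {a b : ℝ} (ha : 0 ≤ a) (hab : a ≤ b) : ckbGauss b ≤ ckbGauss a := by
  unfold ckbGauss gaussianPDFReal
  apply mul_le_mul_of_nonneg_left _ (by positivity)
  apply Real.exp_le_exp.2
  push_cast
  nlinarith

lemma ckbGauss_mono {a b : ℝ} (hb : b ≤ 0) (hab : a ≤ b) : ckbGauss a ≤ ckbGauss b := by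
  unfold ckbGauss gaussianPDFReal
  apply mul_le_mul_of_nonneg_left _ (by positivity)
  apply Real.exp_le_exp.2
  push_cast
  nlinarith

lemma ckbGauss_ii {a b : ℝ} : IntervalIntegrable ckbGauss volume a b :=
  (integrable_gaussianPDFReal 0 1).intervalIntegrable

lemma ckb_key_interval (j : ℤ) {η : ℝ} (hη : η ∈ Set.Icc (0:ℝ) (1/2)) :
    ∫ x in ((j:ℝ)+η)..((j:ℝ)+1-η), ckbGauss x
      ≤ (1-η) * ∫ x in (j:ℝ)..((j:ℝ)+1), ckbGauss x := by
  obtain ⟨hη0, hη2⟩ := hη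
  rcases le_or_gt 0 (j:ℝ) with hj | hj
  · have hsplit : ∫ x in (j:ℝ)..((j:ℝ)+1), ckbGauss x
        = (∫ x in (j:ℝ)..((j:ℝ)+η), ckbGauss x) + ∫ x in ((j:ℝ)+η)..((j:ℝ)+1), ckbGauss x :=
      (intervalIntegral.integral_add_adjacent_intervals ckbGauss_ii ckbGauss_ii).symm
    have hA : η * ckbGauss ((j:ℝ)+η) ≤ ∫ x in (j:ℝ)..((j:ℝ)+η), ckbGauss x := by
      have := intervalIntegral.integral_mono_on (a := (j:ℝ)) (b := (j:ℝ)+η) (by linarith)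
        (intervalIntegrable_const (c := ckbGauss ((j:ℝ)+η))) ckbGauss_ii
        (fun x hx => ckbGauss_anti (by linarith [hx.1]) hx.2)
      simpa [mul_comm] using this
    have hB : ∫ x in ((j:ℝ)+η)..((j:ℝ)+1), ckbGauss x ≤ (1-η) * ckbGauss ((j:ℝ)+η) := by
      have := intervalIntegral.integral_mono_on (a := (j:ℝ)+η) (b := (j:ℝ)+1) (by linarith)
        ckbGauss_ii (intervalIntegrable_const (c := ckbGauss ((j:ℝ)+η)))
        (fun x hx => ckbGauss_anti (by linarith) hx.1)
      simpa [mul_comm, show (j:ℝ)+1-((j:ℝ)+η) = 1-η by ring] using this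
    have hC : ∫ x in ((j:ℝ)+η)..((j:ℝ)+1-η), ckbGauss x
        ≤ ∫ x in ((j:ℝ)+η)..((j:ℝ)+1), ckbGauss x :=
      intervalIntegral.integral_mono_interval le_rfl (by linarith) (by linarith)
        (Filter.Eventually.of_forall ckbGauss_nonneg) ckbGauss_ii
    have hG : 0 ≤ ckbGauss ((j:ℝ)+η) := ckbGauss_nonneg _
    rw [hsplit]
    nlinarith [hC, hA, hB]
  · have hj1 : (j:ℝ) + 1 ≤ 0 := by
      have : j < 0 := by exact_mod_cast hj
      have : j + 1 ≤ 0 := by omega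
      exact_mod_cast this
    have hsplit : ∫ x in (j:ℝ)..((j:ℝ)+1), ckbGauss x
        = (∫ x in (j:ℝ)..((j:ℝ)+1-η), ckbGauss x)
          + ∫ x in ((j:ℝ)+1-η)..((j:ℝ)+1), ckbGauss x :=
      (intervalIntegral.integral_add_adjacent_intervals ckbGauss_ii ckbGauss_ii).symm
    have hA : η * ckbGauss ((j:ℝ)+1-η) ≤ ∫ x in ((j:ℝ)+1-η)..((j:ℝ)+1), ckbGauss x := by
      have := intervalIntegral.integral_mono_on (a := (j:ℝ)+1-η) (b := (j:ℝ)+1) (by linarith)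
        (intervalIntegrable_const (c := ckbGauss ((j:ℝ)+1-η))) ckbGauss_ii
        (fun x hx => ckbGauss_mono (by linarith [hx.2]) hx.1)
      simpa [mul_comm, show (j:ℝ)+1-((j:ℝ)+1-η) = η by ring] using this
    have hB : ∫ x in (j:ℝ)..((j:ℝ)+1-η), ckbGauss x ≤ (1-η) * ckbGauss ((j:ℝ)+1-η) := by
      have := intervalIntegral.integral_mono_on (a := (j:ℝ)) (b := (j:ℝ)+1-η) (by linarith)
        ckbGauss_ii (intervalIntegrable_const (c := ckbGauss ((j:ℝ)+1-η)))
        (fun x hx => ckbGauss_mono (by linarith) hx.2)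
      simpa [mul_comm, show (j:ℝ)+1-η-(j:ℝ) = 1-η by ring] using this
    have hC : ∫ x in ((j:ℝ)+η)..((j:ℝ)+1-η), ckbGauss x
        ≤ ∫ x in (j:ℝ)..((j:ℝ)+1-η), ckbGauss x :=
      intervalIntegral.integral_mono_interval (by linarith) (by linarith) le_rfl
        (Filter.Eventually.of_forall ckbGauss_nonneg) ckbGauss_ii
    have hG : 0 ≤ ckbGauss ((j:ℝ)+1-η) := ckbGauss_nonneg _
    rw [hsplit]
    nlinarith [hC, hA, hB]

lemma ckb_gauss_Icc (a b : ℝ) (hab : a ≤ b) :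
    gaussianReal 0 1 (Icc a b) = ENNReal.ofReal (∫ x in a..b, ckbGauss x) := by
  rw [gaussianReal_apply_eq_integral 0 one_ne_zero, intervalIntegral.integral_of_le hab,
    integral_Icc_eq_integral_Ioc]
  rfl

lemma ckb_gauss_Ico (a b : ℝ) (hab : a ≤ b) :
    gaussianReal 0 1 (Ico a b) = ENNReal.ofReal (∫ x in a..b, ckbGauss x) := by
  rw [gaussianReal_apply_eq_integral 0 one_ne_zero, intervalIntegral.integral_of_le hab,
    integral_Ico_eq_integral_Ioo, integral_Ioc_eq_integral_Ioo]
  rfl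

lemma ckb_onedim_bound {η : ℝ} (hη : η ∈ Set.Icc (0:ℝ) (1/2)) :
    gaussianReal 0 1 (Int.fract ⁻¹' Icc η (1-η)) ≤ ENNReal.ofReal (1-η) := by
  obtain ⟨hη0, hη2⟩ := hη
  set μ := gaussianReal 0 1
  have hsub : Int.fract ⁻¹' Icc η (1-η) ⊆ ⋃ j : ℤ, Icc ((j:ℝ)+η) ((j:ℝ)+1-η) := by
    intro x hx
    refine mem_iUnion.2 ⟨⌊x⌋, ?_⟩
    have h1 := hx.1; have h2 := hx.2
    simp only [Int.fract] at h1 h2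
    constructor <;> [linarith; linarith]
  have hpart : ∑' j : ℤ, μ (Ico (j:ℝ) ((j:ℝ)+1)) = 1 := by
    rw [← measure_iUnion (fun i j hij => ?_) (fun j => measurableSet_Ico)]
    · rw [iUnion_Ico_intCast, measure_univ]
    · exact (pairwise_disjoint_Ico_intCast ℝ) hij
  calc μ (Int.fract ⁻¹' Icc η (1-η)) ≤ μ (⋃ j : ℤ, Icc ((j:ℝ)+η) ((j:ℝ)+1-η)) :=
        measure_mono hsub
    _ ≤ ∑' j : ℤ, μ (Icc ((j:ℝ)+η) ((j:ℝ)+1-η)) := measure_iUnion_le _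
    _ ≤ ∑' j : ℤ, ENNReal.ofReal (1-η) * μ (Ico (j:ℝ) ((j:ℝ)+1)) := by
        refine ENNReal.tsum_le_tsum fun j => ?_
        rw [ckb_gauss_Icc _ _ (by linarith), ckb_gauss_Ico _ _ (by linarith),
          ← ENNReal.ofReal_mul (by linarith)]
        exact ENNReal.ofReal_le_ofReal (ckb_key_interval j ⟨hη0, hη2⟩)
    _ = ENNReal.ofReal (1-η) := by rw [ENNReal.tsum_mul_left, hpart, mul_one]

lemma ckb_distSet_le {d : ℕ} (z z' : Fin d → ℝ) (A : Set (Fin d → ℝ)) (hz' : z' ∈ A) :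
    distSet z A ≤ l2 (z - z') := by
  apply csInf_le
  · exact ⟨0, fun t ht => by obtain ⟨w, _, rfl⟩ := ht; exact Real.sqrt_nonneg _⟩
  · exact ⟨z', hz', rfl⟩

lemma ckb_flip {d : ℕ} (z : Fin d → ℝ) (i : Fin d) {η : ℝ} (hη0 : 0 ≤ η) (hη2 : η ≤ 1/2)
    (h : Int.fract (z i) < η ∨ 1 - η < Int.fract (z i)) :
    ∃ z' : Fin d → ℝ, (Even (∑ j, ⌊z' j⌋) ↔ ¬ Even (∑ j, ⌊z j⌋)) ∧ l2 (z - z') = η := by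
  have hfl := Int.floor_le (z i)
  have hfl' := Int.lt_floor_add_one (z i)
  obtain h | h := h
  · have hfr : z i - ⌊z i⌋ < η := h
    refine ⟨Function.update z i (z i - η), ?_, ?_⟩
    · have hfloor : ⌊z i - η⌋ = ⌊z i⌋ - 1 := by
        rw [Int.floor_eq_iff]
        constructor <;> [push_cast; push_cast] <;> linarith
      have hsum : (∑ j, ⌊Function.update z i (z i - η) j⌋) = (∑ j, ⌊z j⌋) - 1 := by
        have hpt : ∀ j, ⌊Function.update z i (z i - η) j⌋
            = ⌊z j⌋ + (if j = i then -1 else 0) := by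
          intro j
          rcases eq_or_ne j i with rfl | hj
          · simp [Function.update_self, hfloor]; ring
          · simp [Function.update_of_ne hj, hj]
        rw [Finset.sum_congr rfl (fun j _ => hpt j), Finset.sum_add_distrib,
          Finset.sum_ite_eq' Finset.univ i (fun _ => (-1 : ℤ))]
        simp; ring
      rw [hsum]
      simp [Int.even_sub_one]
    · have hpt : ∀ j, (z - Function.update z i (z i - η)) j ^ 2
          = if j = i then η ^ 2 else 0 := by
        intro j
        rcases eq_or_ne j i with rfl | hj
        · simp [Function.update_self]
        · simp [Function.update_of_ne hj, hj]
      unfold l2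
      rw [Finset.sum_congr rfl (fun j _ => hpt j),
        Finset.sum_ite_eq' Finset.univ i (fun _ => η ^ 2)]
      simp [Real.sqrt_sq_eq_abs, abs_of_nonneg hη0]
  · have hfr : 1 - η < z i - ⌊z i⌋ := h
    refine ⟨Function.update z i (z i + η), ?_, ?_⟩
    · have hfloor : ⌊z i + η⌋ = ⌊z i⌋ + 1 := by
        rw [Int.floor_eq_iff]
        constructor <;> [push_cast; push_cast] <;> linarith
      have hsum : (∑ j, ⌊Function.update z i (z i + η) j⌋) = (∑ j, ⌊z j⌋) + 1 := by
        have hpt : ∀ j, ⌊Function.update z i (z i + η) j⌋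
            = ⌊z j⌋ + (if j = i then 1 else 0) := by
          intro j
          rcases eq_or_ne j i with rfl | hj
          · simp [Function.update_self, hfloor]
          · simp [Function.update_of_ne hj, hj]
        rw [Finset.sum_congr rfl (fun j _ => hpt j), Finset.sum_add_distrib,
          Finset.sum_ite_eq' Finset.univ i (fun _ => (1 : ℤ))]
        simp
      rw [hsum]
      simp [Int.even_add_one]
    · have hpt : ∀ j, (z - Function.update z i (z i + η)) j ^ 2
          = if j = i then η ^ 2 else 0 := by
        intro j
        rcases eq_or_ne j i with rfl | hj
        · simp [Function.update_self]
        · simp [Function.update_of_ne hj, hj]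
      unfold l2
      rw [Finset.sum_congr rfl (fun j _ => hpt j),
        Finset.sum_ite_eq' Finset.univ i (fun _ => η ^ 2)]
      simp [Real.sqrt_sq_eq_abs, abs_of_nonneg hη0]

instance ckb_prob (d : ℕ) : IsProbabilityMeasure (stdGaussian d) := by
  unfold _root_.stdGaussian; infer_instance

/-- Checkerboard partition lower bound (Example 1, Eq. (14)). -/
theorem checkerboard_lower_bound (d : ℕ) (η : ℝ) (hη : η ∈ Set.Icc (0 : ℝ) (1 / 2)) :
    ((stdGaussian d)
        {z | z ∈ {z : Fin d → ℝ | Even (∑ i, ⌊z i⌋)} ∧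
          distSet z {z : Fin d → ℝ | Even (∑ i, ⌊z i⌋)}ᶜ ≤ η}).toReal +
      ((stdGaussian d)
        {z | z ∈ {z : Fin d → ℝ | Even (∑ i, ⌊z i⌋)}ᶜ ∧
          distSet z {z : Fin d → ℝ | Even (∑ i, ⌊z i⌋)} ≤ η}).toReal ≥
      1 - (1 - η) ^ d := by
  obtain ⟨hη0, hη2⟩ := hη
  set ν := stdGaussian d
  set B : Set (Fin d → ℝ) := {z : Fin d → ℝ | Even (∑ i, ⌊z i⌋)} with hB
  set A₁ : Set (Fin d → ℝ) := {z | z ∈ B ∧ distSet z Bᶜ ≤ η} with hA₁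
  set A₂ : Set (Fin d → ℝ) := {z | z ∈ Bᶜ ∧ distSet z B ≤ η} with hA₂
  set T : Set ℝ := Int.fract ⁻¹' Icc η (1-η) with hT
  set S : Set (Fin d → ℝ) := Set.pi univ (fun _ => T) with hS
  have hTmeas : MeasurableSet T := measurable_fract measurableSet_Icc
  have hSmeas : MeasurableSet S := MeasurableSet.univ_pi fun _ => hTmeas
  -- S^c ⊆ A₁ ∪ A₂
  have hsub : Sᶜ ⊆ A₁ ∪ A₂ := by
    intro z hz
    simp only [hS, mem_compl_iff, mem_univ_pi, not_forall] at hz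
    obtain ⟨i, hi⟩ := hz
    have hi' : Int.fract (z i) < η ∨ 1 - η < Int.fract (z i) := by
      simp only [hT, mem_preimage, mem_Icc, not_and_or, not_le] at hi
      exact hi
    obtain ⟨z', hpar, hl2⟩ := ckb_flip z i hη0 hη2 hi'
    by_cases hzB : z ∈ B
    · left
      refine ⟨hzB, ?_⟩
      have hz'B : z' ∈ Bᶜ := by
        simp only [hB, mem_compl_iff, mem_setOf_eq] at *
        exact fun h => (hpar.mp h) hzB
      calc distSet z Bᶜ ≤ l2 (z - z') := ckb_distSet_le z z' Bᶜ hz'B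
        _ = η := hl2
    · right
      refine ⟨hzB, ?_⟩
      have hz'B : z' ∈ B := by
        simp only [hB, mem_compl_iff, mem_setOf_eq] at *
        exact hpar.mpr hzB
      calc distSet z B ≤ l2 (z - z') := ckb_distSet_le z z' B hz'B
        _ = η := hl2
  -- measure of S
  have hνS : ν S ≤ ENNReal.ofReal ((1-η)^d) := by
    have : ν S = (gaussianReal 0 1 T) ^ d := by
      rw [hS]
      show Measure.pi (fun _ => gaussianReal 0 1) (Set.pi univ fun _ => T) = _
      rw [Measure.pi_pi]
      simp [Finset.prod_const]
    rw [this, ENNReal.ofReal_pow (by linarith)]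
    exact pow_le_pow_left' (ckb_onedim_bound ⟨hη0, hη2⟩) d
  have hpow1 : (1-η)^d ≤ 1 := pow_le_one₀ (by linarith) (by linarith)
  -- chain in ℝ≥0∞
  have hchain : ENNReal.ofReal (1 - (1-η)^d) ≤ ν A₁ + ν A₂ := by
    have h1 : ν Sᶜ ≤ ν A₁ + ν A₂ :=
      le_trans (measure_mono hsub) (measure_union_le _ _)
    have h2 : ENNReal.ofReal (1 - (1-η)^d) ≤ ν Sᶜ := by
      rw [measure_compl hSmeas (measure_ne_top _ _), measure_univ,
        ENNReal.ofReal_sub _ (pow_nonneg (by linarith) d), ENNReal.ofReal_one]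
      exact tsub_le_tsub le_rfl hνS
    exact le_trans h2 h1
  have hfin1 : ν A₁ ≠ ⊤ := measure_ne_top _ _
  have hfin2 : ν A₂ ≠ ⊤ := measure_ne_top _ _
  have := ENNReal.toReal_mono (by simp [hfin1, hfin2, ENNReal.add_ne_top]) hchain
  rw [ENNReal.toReal_ofReal (by linarith), ENNReal.toReal_add hfin1 hfin2] at this
  exact this
end

section
/- For any integer j and any η ∈ [0, 1/2], ∫_{j+η}^{j+1-η} e^{-z²/2} dz ≤ (1-η) · ∫_j^{j+1} e^{-z²/2} dz. -/
open Real

open intervalIntegral in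
lemma gaussian_aux_nonneg (a η : ℝ) (ha : 0 ≤ a) (hη0 : 0 ≤ η) (hη1 : η ≤ 1 / 2) :
    (∫ z in (a + η)..(a + 1 - η), Real.exp (-z ^ 2 / 2)) ≤
      (1 - η) * ∫ z in a..(a + 1), Real.exp (-z ^ 2 / 2) := by
  have hc : Continuous fun z : ℝ => Real.exp (-z ^ 2 / 2) := by continuity
  have hint : ∀ u v : ℝ, IntervalIntegrable (fun z : ℝ => Real.exp (-z ^ 2 / 2))
      MeasureTheory.volume u v := fun u v => hc.intervalIntegrable u v
  set F := Real.exp (-(a + η) ^ 2 / 2) with hFdef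
  have hF : 0 ≤ F := (Real.exp_pos _).le
  have h1 : (∫ z in a..(a + η), Real.exp (-z ^ 2 / 2)) +
      (∫ z in (a + η)..(a + 1 - η), Real.exp (-z ^ 2 / 2)) =
      ∫ z in a..(a + 1 - η), Real.exp (-z ^ 2 / 2) :=
    integral_add_adjacent_intervals (hint _ _) (hint _ _)
  have h2 : (∫ z in a..(a + 1 - η), Real.exp (-z ^ 2 / 2)) +
      (∫ z in (a + 1 - η)..(a + 1), Real.exp (-z ^ 2 / 2)) =
      ∫ z in a..(a + 1), Real.exp (-z ^ 2 / 2) :=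
    integral_add_adjacent_intervals (hint _ _) (hint _ _)
  have hM : (∫ z in (a + η)..(a + 1 - η), Real.exp (-z ^ 2 / 2)) ≤ (1 - 2 * η) * F := by
    have hle : a + η ≤ a + 1 - η := by linarith
    have := integral_mono_on (μ := MeasureTheory.volume) hle (hint _ _)
      (_root_.intervalIntegrable_const (c := F))
      (fun z hz => by
        have hz1 : a + η ≤ z := hz.1
        have hz0 : (0 : ℝ) ≤ a + η := by linarith
        rw [hFdef]
        apply Real.exp_le_exp.2
        have : (a + η) ^ 2 ≤ z ^ 2 := by nlinarith
        linarith)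
    exact this.trans_eq (by rw [integral_const, smul_eq_mul]; ring)
  have hL : η * F ≤ ∫ z in a..(a + η), Real.exp (-z ^ 2 / 2) := by
    have hle : a ≤ a + η := by linarith
    have := integral_mono_on (μ := MeasureTheory.volume) hle
      (_root_.intervalIntegrable_const (c := F)) (hint _ _)
      (fun z hz => by
        have hz1 : z ≤ a + η := hz.2
        have hz0 : (0 : ℝ) ≤ z := le_trans ha hz.1
        rw [hFdef]
        apply Real.exp_le_exp.2
        have : z ^ 2 ≤ (a + η) ^ 2 := by nlinarith
        linarith)
    calc η * F = ∫ _ in a..(a + η), F := by rw [integral_const, smul_eq_mul]; ring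
    _ ≤ _ := this
  have hR : 0 ≤ ∫ z in (a + 1 - η)..(a + 1), Real.exp (-z ^ 2 / 2) :=
    integral_nonneg (by linarith) (fun x _ => (Real.exp_pos _).le)
  rw [← h2, ← h1]
  have p1 : (1 - η) * (η * F) ≤ (1 - η) * ∫ z in a..(a + η), Real.exp (-z ^ 2 / 2) :=
    mul_le_mul_of_nonneg_left hL (by linarith)
  have p2 : η * ∫ z in (a + η)..(a + 1 - η), Real.exp (-z ^ 2 / 2) ≤ η * ((1 - 2 * η) * F) :=
    mul_le_mul_of_nonneg_left hM hη0
  have p3 : 0 ≤ (1 - η) * ∫ z in (a + 1 - η)..(a + 1), Real.exp (-z ^ 2 / 2) :=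
    mul_nonneg (by linarith) hR
  nlinarith [p1, p2, p3, hF, mul_nonneg (mul_nonneg hη0 hη0) hF]

/-- The Gaussian kernel mass of the central subinterval of length `1 - 2η` of a unit
interval `[j, j+1]` is at most a `(1-η)`-fraction of the full mass. -/
theorem gaussian_kernel_central_interval_bound (j : ℤ) (η : ℝ)
    (hη : η ∈ Set.Icc (0 : ℝ) (1 / 2)) :
    (∫ z in ((j : ℝ) + η)..((j : ℝ) + 1 - η), Real.exp (-z ^ 2 / 2)) ≤
      (1 - η) * ∫ z in (j : ℝ)..((j : ℝ) + 1), Real.exp (-z ^ 2 / 2) := by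
  obtain ⟨hη0, hη1⟩ := hη
  rcases le_or_gt 0 j with hj | hj
  · exact gaussian_aux_nonneg (j : ℝ) η (by exact_mod_cast hj) hη0 hη1
  · have hj1 : (j : ℝ) + 1 ≤ 0 := by exact_mod_cast (by omega : j + 1 ≤ 0)
    set a : ℝ := -(j : ℝ) - 1 with hadef
    have ha : 0 ≤ a := by linarith
    have even_eq : ∀ z : ℝ, Real.exp (-(-z) ^ 2 / 2) = Real.exp (-z ^ 2 / 2) := by
      intro z; rw [neg_sq]
    have e1 : (∫ z in ((j : ℝ) + η)..((j : ℝ) + 1 - η), Real.exp (-z ^ 2 / 2)) =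
        ∫ z in (a + η)..(a + 1 - η), Real.exp (-z ^ 2 / 2) := by
      rw [show a + η = -((j : ℝ) + 1 - η) by rw [hadef]; ring,
          show a + 1 - η = -((j : ℝ) + η) by rw [hadef]; ring,
          ← intervalIntegral.integral_comp_neg (fun z => Real.exp (-z ^ 2 / 2))]
      simp only [even_eq]
    have e2 : (∫ z in (j : ℝ)..((j : ℝ) + 1), Real.exp (-z ^ 2 / 2)) =
        ∫ z in a..(a + 1), Real.exp (-z ^ 2 / 2) := by
      rw [show a = -((j : ℝ) + 1) by rw [hadef]; ring,
          show -((j : ℝ) + 1) + 1 = -(j : ℝ) by ring,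
          ← intervalIntegral.integral_comp_neg (fun z => Real.exp (-z ^ 2 / 2))]
      simp only [even_eq]
    rw [e1, e2]
    exact gaussian_aux_nonneg a η ha hη0 hη1
end
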